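/- Let E and F be Banach spaces, T : E → F a bounded linear operator, M ⊆ E a closed subspace, and {(z_n, f_n)} ⊆ E × M^⊥ a biorthogonal system. Assume there exists α > 1 with ‖Q_M z_n‖ ≤ αⁿ ‖f_n‖⁻¹ and ‖T z_n‖ ≤ α^{-2n} ‖Q_M z_n‖ for all n. Then for every sequence {ε_n} of positive reals and every sequence {W_n} of closed finite-codimensional subspaces of E, there exists a block sequence {u_n} of {z_n} such that: (1) {Q_M u_n} is a normalized basic sequence in E/M; (2) u_n ∈ W₁ ∩ ... ∩ W_n for each n; and (3) ‖T u_n‖ ≤ ε_n for each n. -/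

import Mathlib

open Submodule Topology TopologicalSpace

/-- `T` has the Kato property for the closed subspace `L`: for every closed
finite-codimensional subspace `W ⊇ L` and every `ε > 0` there is `u ∈ W \ L`
with `‖T u‖ ≤ ε ‖Q_L u‖`. -/
def HasKatoPropFor {E F : Type*} [SeminormedAddCommGroup E] [NormedSpace ℝ E]
    [SeminormedAddCommGroup F] [NormedSpace ℝ F]
    (T : E →L[ℝ] F) (L : Submodule ℝ E) : Prop :=
  ∀ W : Submodule ℝ E, IsClosed (W : Set E) → L ≤ W →
    FiniteDimensional ℝ (E ⧸ W) → ∀ ε : ℝ, 0 < ε →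
      ∃ u ∈ W, u ∉ L ∧ ‖T u‖ ≤ ε * ‖L.mkQ u‖

/-- `T` has the Kato property (for the zero subspace). -/
def HasKatoProp {E F : Type*} [SeminormedAddCommGroup E] [NormedSpace ℝ E]
    [SeminormedAddCommGroup F] [NormedSpace ℝ F] (T : E →L[ℝ] F) : Prop :=
  ∀ W : Submodule ℝ E, IsClosed (W : Set E) →
    FiniteDimensional ℝ (E ⧸ W) → ∀ ε : ℝ, 0 < ε →
      ∃ u ∈ W, u ≠ 0 ∧ ‖T u‖ ≤ ε * ‖u‖

/-- `R` is an operator range in `E`: the image of a bounded linear operator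
from some Banach space. -/
def IsOperatorRange {E : Type*} [NormedAddCommGroup E] [NormedSpace ℝ E]
    (R : Submodule ℝ E) : Prop :=
  ∃ (G : Type) (_ : NormedAddCommGroup G) (_ : NormedSpace ℝ G) (_ : CompleteSpace G)
    (A : G →L[ℝ] E), LinearMap.range (A : G →ₗ[ℝ] E) = R

/-- A proper dense operator range: a dense operator range of infinite codimension. -/
def IsProperDenseOperatorRange {E : Type*} [NormedAddCommGroup E] [NormedSpace ℝ E]
    (R : Submodule ℝ E) : Prop :=
  IsOperatorRange R ∧ Dense (R : Set E) ∧ ¬ FiniteDimensional ℝ (E ⧸ R)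

/-- `E` has an infinite-dimensional separable quotient. -/
def HasSepQuotient (E : Type*) [NormedAddCommGroup E] [NormedSpace ℝ E] : Prop :=
  ∃ X : Submodule ℝ E, IsClosed (X : Set E) ∧
    TopologicalSpace.SeparableSpace (E ⧸ X) ∧ ¬ FiniteDimensional ℝ (E ⧸ X)

/-- A normalized basic sequence: norm-one terms and uniformly bounded basis
projections (so it is a Schauder basis of its closed linear span). -/
def IsNormalizedBasicSeq {V : Type*} [SeminormedAddCommGroup V] [NormedSpace ℝ V]
    (v : ℕ → V) : Prop :=
  (∀ n, ‖v n‖ = 1) ∧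
  ∃ C : ℝ, 0 < C ∧ ∀ (a : ℕ → ℝ) (m n : ℕ), m ≤ n →
    ‖∑ i ∈ Finset.range m, a i • v i‖ ≤ C * ‖∑ i ∈ Finset.range n, a i • v i‖

/-- `u` is a block sequence of `z`: each `u n` is a finite linear combination of
the `z i` over consecutive disjoint increasing index blocks. -/
def IsBlockSeq {E : Type*} [AddCommMonoid E] [Module ℝ E] (z u : ℕ → E) : Prop :=
  ∃ (p : ℕ → ℕ) (a : ℕ → ℝ), StrictMono p ∧
    ∀ n, u n = ∑ i ∈ Finset.Ico (p n) (p (n + 1)), a i • z i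

/-- The restriction to the subspace `X` of the canonical quotient map `E → E ⧸ Y`,
as a continuous linear map. -/
noncomputable def quotRestrict {E : Type*} [NormedAddCommGroup E] [NormedSpace ℝ E]
    (X Y : Submodule ℝ E) : ↥X →L[ℝ] E ⧸ Y :=
  { toLinearMap := Y.mkQ.comp X.subtype,
    cont := continuous_quot_mk.comp continuous_subtype_val }


section Aux

lemma mazur {V : Type*} [NormedAddCommGroup V] [NormedSpace ℝ V]
    (S : Submodule ℝ V) (hS : FiniteDimensional ℝ S) {δ : ℝ} (hδ : 0 < δ) :
    ∃ Φ : Finset (V →L[ℝ] ℝ), ∀ s ∈ S, ∀ w : V, (∀ φ ∈ Φ, φ w = 0) →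
      ‖s‖ ≤ (1 + δ) * ‖s + w‖ := by
  classical
  set δ' : ℝ := δ / (1 + δ) with hδ'def
  have h1δ : (0:ℝ) < 1 + δ := by linarith
  have hδ'pos : 0 < δ' := div_pos hδ h1δ
  have hkey : (1 + δ) * (1 - δ') = 1 := by
    rw [hδ'def, mul_sub, mul_div_assoc', mul_comm (1 + δ) δ, mul_div_assoc, div_self h1δ.ne']
    ring
  -- compact sphere in S
  have hK : IsCompact (Metric.sphere (0:S) 1) := isCompact_sphere _ _
  have hcov : (Metric.sphere (0:S) 1) ⊆ ⋃ x ∈ (Metric.sphere (0:S) 1), Metric.ball x δ' := by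
    intro x hx
    exact Set.mem_biUnion hx (Metric.mem_ball_self hδ'pos)
  obtain ⟨t, htK, htfin, htcov⟩ := hK.elim_finite_subcover_image
    (fun x _ => Metric.isOpen_ball) hcov
  -- norming functionals
  have hg : ∀ c : S, ∃ g : V →L[ℝ] ℝ, ‖g‖ ≤ 1 ∧ g (c:V) = ‖(c:V)‖ := by
    intro c
    by_cases hc : (c : V) = 0
    · exact ⟨0, by simp, by simp [hc]⟩
    · obtain ⟨g, hg1, hg2⟩ := exists_dual_vector ℝ (c:V) (norm_ne_zero_iff.2 hc)
      exact ⟨g, le_of_eq hg1, hg2⟩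
  choose g hgle hgval using hg
  refine ⟨htfin.toFinset.image g, ?_⟩
  intro s hs w hw
  rcases eq_or_ne s 0 with rfl | hs0
  · simpa using mul_nonneg (le_of_lt h1δ) (norm_nonneg _)
  have hsn : (0:ℝ) < ‖s‖ := norm_pos_iff.2 hs0
  -- the normalized element of the sphere
  set x : S := (‖s‖⁻¹ : ℝ) • ⟨s, hs⟩ with hxdef
  have hxs : x ∈ Metric.sphere (0:S) 1 := by
    simp only [Metric.mem_sphere, dist_zero_right]
    rw [show ‖x‖ = ‖(x:V)‖ from rfl]
    simp [hxdef, norm_smul, abs_of_nonneg (inv_nonneg.2 (norm_nonneg s)),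
      inv_mul_cancel₀ (ne_of_gt hsn)]
  obtain ⟨c, hc, hxc⟩ := Set.mem_iUnion₂.1 (htcov hxs)
  have hcball : dist x c < δ' := Metric.mem_ball.1 hxc
  have hcsph : c ∈ Metric.sphere (0:S) 1 := htK hc
  have hcnorm : ‖(c:V)‖ = 1 := by
    simpa [dist_zero_right] using hcsph
  have hgc0 : g c w = 0 := by
    apply hw
    exact Finset.mem_image_of_mem g (htfin.mem_toFinset.2 hc)
  -- main estimate
  have hw' : g c ((‖s‖⁻¹ : ℝ) • w) = 0 := by
    rw [map_smul, hgc0]; simp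
  have h1 : (1:ℝ) ≤ ‖(c:V) + (‖s‖⁻¹ : ℝ) • w‖ := by
    have := hgval c
    calc (1:ℝ) = g c ((c:V) + (‖s‖⁻¹ : ℝ) • w) := by
          rw [map_add, hw', hgval c, hcnorm]; ring
      _ ≤ |g c ((c:V) + (‖s‖⁻¹ : ℝ) • w)| := le_abs_self _
      _ ≤ ‖g c‖ * ‖(c:V) + (‖s‖⁻¹ : ℝ) • w‖ := (g c).le_opNorm _
      _ ≤ 1 * ‖(c:V) + (‖s‖⁻¹ : ℝ) • w‖ :=
          mul_le_mul_of_nonneg_right (hgle c) (norm_nonneg _)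
      _ = _ := one_mul _
  have hdist : ‖(‖s‖⁻¹ : ℝ) • s - (c:V)‖ < δ' := by
    have : dist (x:V) (c:V) < δ' := hcball
    rw [dist_eq_norm] at this
    simpa [hxdef] using this
  have h2 : 1 - δ' ≤ ‖(‖s‖⁻¹ : ℝ) • s + (‖s‖⁻¹ : ℝ) • w‖ := by
    have hsplit : ‖(c:V) + (‖s‖⁻¹ : ℝ) • w‖
        ≤ ‖(‖s‖⁻¹ : ℝ) • s + (‖s‖⁻¹ : ℝ) • w‖ + ‖(‖s‖⁻¹ : ℝ) • s - (c:V)‖ := by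
      have heq : (c:V) + (‖s‖⁻¹ : ℝ) • w
          = ((‖s‖⁻¹ : ℝ) • s + (‖s‖⁻¹ : ℝ) • w) - ((‖s‖⁻¹ : ℝ) • s - (c:V)) := by abel
      rw [heq]
      exact (norm_sub_le _ _)
    linarith [h1, hdist]
  have h3 : ‖(‖s‖⁻¹ : ℝ) • s + (‖s‖⁻¹ : ℝ) • w‖ = ‖s‖⁻¹ * ‖s + w‖ := by
    rw [← smul_add, norm_smul]
    simp [abs_of_nonneg (inv_nonneg.2 (norm_nonneg s))]
  rw [h3] at h2
  -- conclude
  have := mul_le_mul_of_nonneg_left h2 (le_of_lt h1δ)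
  rw [hkey] at this
  calc ‖s‖ = 1 * ‖s‖ := (one_mul _).symm
    _ ≤ ((1 + δ) * (‖s‖⁻¹ * ‖s + w‖)) * ‖s‖ := by
        exact mul_le_mul_of_nonneg_right this (norm_nonneg s)
    _ = (1 + δ) * ‖s + w‖ * (‖s‖⁻¹ * ‖s‖) := by ring
    _ = (1 + δ) * ‖s + w‖ := by rw [inv_mul_cancel₀ (ne_of_gt hsn), mul_one]

lemma exists_ne_zero_of_finrank_lt {D G : Type*} [AddCommGroup D] [Module ℝ D]
    [AddCommGroup G] [Module ℝ G] [FiniteDimensional ℝ D] [FiniteDimensional ℝ G]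
    (L : D →ₗ[ℝ] G) (h : Module.finrank ℝ G < Module.finrank ℝ D) :
    ∃ a : D, a ≠ 0 ∧ L a = 0 := by
  by_contra hc
  push_neg at hc
  have hinj : Function.Injective L := by
    rw [← LinearMap.ker_eq_bot, Submodule.eq_bot_iff]
    intro x hx
    by_contra hx0
    exact hc x hx0 hx
  exact absurd (LinearMap.finrank_le_finrank_of_injective hinj) (not_le.2 h)

lemma abs_apply_le_norm_mkQ {E : Type*} [NormedAddCommGroup E] [NormedSpace ℝ E]
    (M : Submodule ℝ E) (g : E →L[ℝ] ℝ) (hg : ∀ x ∈ M, g x = 0) (u : E) :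
    |g u| ≤ ‖g‖ * ‖M.mkQ u‖ := by
  refine le_of_forall_pos_le_add (fun ε hε => ?_)
  have hd : (0:ℝ) < ‖g‖ + 1 := by positivity
  have hε' : 0 < ε / (‖g‖ + 1) := div_pos hε hd
  obtain ⟨m, hm, hmlt⟩ := Submodule.Quotient.norm_mk_lt (M.mkQ u) hε'
  have hmem : m - u ∈ M := by
    rw [← Submodule.Quotient.eq]
    simpa [Submodule.mkQ_apply] using hm
  have heq : g u = g m := by
    have h0 := hg (m - u) hmem
    rw [map_sub] at h0
    linarith
  have h1 : |g m| ≤ ‖g‖ * ‖m‖ := g.le_opNorm m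
  have h2 : ‖g‖ * ‖m‖ ≤ ‖g‖ * (‖M.mkQ u‖ + ε / (‖g‖ + 1)) :=
    mul_le_mul_of_nonneg_left (le_of_lt hmlt) (norm_nonneg g)
  have h3 : ‖g‖ * (ε / (‖g‖ + 1)) ≤ ε := by
    have hle : ‖g‖ / (‖g‖ + 1) ≤ 1 := (div_le_one hd).2 (by linarith [norm_nonneg g])
    calc ‖g‖ * (ε / (‖g‖+1)) = (‖g‖/(‖g‖+1)) * ε := by ring
      _ ≤ 1 * ε := mul_le_mul_of_nonneg_right hle hε.le
      _ = ε := one_mul ε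
  have h4 : ‖g‖ * (‖M.mkQ u‖ + ε / (‖g‖ + 1))
      = ‖g‖ * ‖M.mkQ u‖ + ‖g‖ * (ε / (‖g‖ + 1)) := mul_add _ _ _
  rw [heq]
  linarith

lemma geom_Ico_le {r : ℝ} (hr0 : 0 ≤ r) (hr1 : r < 1) (p q : ℕ) :
    ∑ i ∈ Finset.Ico p q, r ^ i ≤ r ^ p * (1 - r)⁻¹ := by
  rcases le_or_gt p q with h | h
  · rw [Finset.sum_Ico_eq_sum_range]
    have hco : ∀ i ∈ Finset.range (q - p), r ^ (p + i) = r ^ p * r ^ i :=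
      fun i _ => pow_add r p i
    rw [Finset.sum_congr rfl hco, ← Finset.mul_sum]
    refine mul_le_mul_of_nonneg_left ?_ (pow_nonneg hr0 p)
    calc ∑ i ∈ Finset.range (q - p), r ^ i
        ≤ ∑' i : ℕ, r ^ i := Summable.sum_le_tsum _ (fun i _ => pow_nonneg hr0 i)
          (summable_geometric_of_lt_one hr0 hr1)
      _ = (1 - r)⁻¹ := tsum_geometric_of_lt_one hr0 hr1
  · rw [Finset.Ico_eq_empty (by omega)]
    simp only [Finset.sum_empty]
    have : (0:ℝ) ≤ (1-r)⁻¹ := inv_nonneg.2 (by linarith)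
    exact mul_nonneg (pow_nonneg hr0 p) this

lemma Tblock_bound {E F : Type*} [NormedAddCommGroup E] [NormedSpace ℝ E]
    [NormedAddCommGroup F] [NormedSpace ℝ F]
    (T : E →L[ℝ] F) (M : Submodule ℝ E) (z : ℕ → E) (f : ℕ → E →L[ℝ] ℝ)
    (hfM : ∀ n, ∀ x ∈ M, f n x = 0)
    (hbi : ∀ n m, f n (z m) = if n = m then 1 else 0)
    {α : ℝ} (hα : 1 < α)
    (h1 : ∀ n, ‖M.mkQ (z n)‖ ≤ α ^ n * ‖f n‖⁻¹)
    (h2 : ∀ n, ‖T (z n)‖ ≤ (α ^ (2 * n))⁻¹ * ‖M.mkQ (z n)‖)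
    (p q : ℕ) (a : ℕ → ℝ) :
    ‖T (∑ i ∈ Finset.Ico p q, a i • z i)‖
      ≤ (α⁻¹ ^ p * (1 - α⁻¹)⁻¹) * ‖M.mkQ (∑ i ∈ Finset.Ico p q, a i • z i)‖ := by
  set u := ∑ i ∈ Finset.Ico p q, a i • z i with hu
  have hα0 : (0:ℝ) < α := lt_trans one_pos hα
  have hfpos : ∀ i, (0:ℝ) < ‖f i‖ := by
    intro i
    have h10 : f i (z i) = 1 := by simpa using hbi i i
    have hne : f i ≠ 0 := by
      intro h
      rw [h] at h10
      simpa using h10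
    exact norm_pos_iff.2 hne
  -- coefficients recovered from u
  have hcoef : ∀ i ∈ Finset.Ico p q, f i u = a i := by
    intro i hi
    rw [hu, map_sum, Finset.sum_eq_single i]
    · rw [map_smul, hbi i i]; simp
    · intro j hj hji
      rw [map_smul, hbi i j, if_neg (Ne.symm hji)]; simp
    · intro h; exact absurd hi h
  -- termwise bound
  have hterm : ∀ i ∈ Finset.Ico p q, ‖a i • T (z i)‖ ≤ α⁻¹ ^ i * ‖M.mkQ u‖ := by
    intro i hi
    rw [norm_smul, Real.norm_eq_abs]
    have hai : |a i| ≤ ‖f i‖ * ‖M.mkQ u‖ := by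
      rw [← hcoef i hi]
      exact abs_apply_le_norm_mkQ M (f i) (hfM i) u
    have hTz : ‖T (z i)‖ ≤ (α ^ (2 * i))⁻¹ * (α ^ i * ‖f i‖⁻¹) := by
      refine (h2 i).trans ?_
      exact mul_le_mul_of_nonneg_left (h1 i) (by positivity)
    calc |a i| * ‖T (z i)‖
        ≤ (‖f i‖ * ‖M.mkQ u‖) * ((α ^ (2 * i))⁻¹ * (α ^ i * ‖f i‖⁻¹)) :=
          mul_le_mul hai hTz (norm_nonneg _) (by positivity)
      _ = α⁻¹ ^ i * ‖M.mkQ u‖ := by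
          rw [inv_pow, two_mul, pow_add]
          field_simp
          exact mul_div_cancel_left₀ _ (hfpos i).ne'
  -- sum up
  have hsum : ‖T u‖ ≤ ∑ i ∈ Finset.Ico p q, α⁻¹ ^ i * ‖M.mkQ u‖ := by
    have : T u = ∑ i ∈ Finset.Ico p q, a i • T (z i) := by
      rw [hu, map_sum]
      exact Finset.sum_congr rfl (fun i _ => by rw [map_smul])
    rw [this]
    exact (norm_sum_le _ _).trans (Finset.sum_le_sum hterm)
  rw [← Finset.sum_mul] at hsum
  refine hsum.trans ?_
  refine mul_le_mul_of_nonneg_right ?_ (norm_nonneg _)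
  exact geom_Ico_le (by positivity) (by rw [inv_lt_one_iff₀]; right; exact hα) p q

lemma key {E F : Type*} [NormedAddCommGroup E] [NormedSpace ℝ E]
    [NormedAddCommGroup F] [NormedSpace ℝ F]
    (T : E →L[ℝ] F) (M : Submodule ℝ E) (hM : IsClosed (M : Set E))
    (z : ℕ → E) (f : ℕ → E →L[ℝ] ℝ)
    (hfM : ∀ n, ∀ x ∈ M, f n x = 0)
    (hbi : ∀ n m, f n (z m) = if n = m then 1 else 0)
    {α : ℝ} (hα : 1 < α)
    (h1 : ∀ n, ‖M.mkQ (z n)‖ ≤ α ^ n * ‖f n‖⁻¹)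
    (h2 : ∀ n, ‖T (z n)‖ ≤ (α ^ (2 * n))⁻¹ * ‖M.mkQ (z n)‖)
    (W : ℕ → Submodule ℝ E) (hWf : ∀ n, FiniteDimensional ℝ (E ⧸ W n))
    (n N : ℕ) (S : Submodule ℝ (E ⧸ M)) (hS : FiniteDimensional ℝ S)
    {δ ε' : ℝ} (hδ : 0 < δ) (hε' : 0 < ε') :
    ∃ q, N < q ∧ ∃ a : ℕ → ℝ,
      (∀ i, i ∉ Finset.Ico N q → a i = 0) ∧
      (∀ i ≤ n, (∑ i ∈ Finset.Ico N q, a i • z i) ∈ W i) ∧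
      ‖M.mkQ (∑ i ∈ Finset.Ico N q, a i • z i)‖ = 1 ∧
      ‖T (∑ i ∈ Finset.Ico N q, a i • z i)‖ ≤ ε' ∧
      (∀ s ∈ S, ∀ t : ℝ, ‖s‖ ≤ (1 + δ) * ‖s + t • M.mkQ (∑ i ∈ Finset.Ico N q, a i • z i)‖) := by
  classical
  haveI : IsClosed (M : Set E) := hM
  have hα0 : (0:ℝ) < α := lt_trans one_pos hα
  set r : ℝ := α⁻¹ with hrdef
  have hr0 : 0 ≤ r := inv_nonneg.2 hα0.le
  have hr1 : r < 1 := by rw [hrdef, inv_lt_one_iff₀]; right; exact hα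
  -- choose starting index p
  have h1r : (0:ℝ) < 1 - r := by linarith
  obtain ⟨k, hk⟩ := exists_pow_lt_of_lt_one (mul_pos hε' h1r) hr1
  set p := max N k with hpdef
  have hpN : N ≤ p := le_max_left _ _
  have hrp : r ^ p * (1 - r)⁻¹ ≤ ε' := by
    have hle : r ^ p ≤ r ^ k := pow_le_pow_of_le_one hr0 hr1.le (le_max_right _ _)
    rw [← le_div_iff₀]
    · calc r ^ p ≤ r ^ k := hle
        _ ≤ ε' * (1 - r) := hk.le
        _ = ε' / (1 - r)⁻¹ := by field_simp
    · exact inv_pos.2 h1r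
  -- Mazur functionals
  obtain ⟨Φ, hΦ⟩ := mazur S hS hδ
  -- finite-dimensional target
  haveI : ∀ i : Fin (n+1), FiniteDimensional ℝ (E ⧸ W i) := fun i => hWf i
  set G := ((i : Fin (n+1)) → E ⧸ W i) × ({φ // φ ∈ Φ} → ℝ) with hGdef
  haveI : FiniteDimensional ℝ G := by infer_instance
  set N' := Module.finrank ℝ G + 1 with hN'def
  -- the constraint map
  set Ψ : E →ₗ[ℝ] G := LinearMap.prod
    (LinearMap.pi (fun i : Fin (n+1) => (W i).mkQ))
    (LinearMap.pi (fun φ : {φ // φ ∈ Φ} =>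
      ((φ : (E ⧸ M) →L[ℝ] ℝ).toLinearMap).comp M.mkQ)) with hΨdef
  -- the combination map
  set comb : (Fin N' → ℝ) →ₗ[ℝ] E :=
    { toFun := fun b => ∑ j : Fin N', b j • z (p + j),
      map_add' := by
        intro b c
        simp [add_smul, Finset.sum_add_distrib],
      map_smul' := by
        intro t b
        simp [smul_smul, Finset.smul_sum] } with hcombdef
  have hrank : Module.finrank ℝ G < Module.finrank ℝ (Fin N' → ℝ) := by
    rw [Module.finrank_fin_fun]
    omega
  obtain ⟨b, hb0, hLb⟩ := exists_ne_zero_of_finrank_lt (Ψ.comp comb) hrank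
  set u₀ : E := comb b with hu₀def
  -- constraints satisfied by u₀
  have hΨu₀ : Ψ u₀ = 0 := hLb
  have hWu₀ : ∀ i : Fin (n+1), u₀ ∈ W i := by
    intro i
    have h0 : ((LinearMap.pi (fun i : Fin (n+1) => (W (i:ℕ)).mkQ)) u₀) i = 0 :=
      congrFun (congrArg Prod.fst hΨu₀) i
    rw [LinearMap.pi_apply, Submodule.mkQ_apply, Submodule.Quotient.mk_eq_zero] at h0
    exact h0
  have hφu₀ : ∀ φ ∈ Φ, φ (M.mkQ u₀) = 0 := by
    intro φ hφ
    have := congrArg (fun g : G => g.2 ⟨φ, hφ⟩) hΨu₀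
    exact this
  -- u₀ ∉ M
  obtain ⟨j₀, hj₀⟩ : ∃ j, b j ≠ 0 := Function.ne_iff.1 hb0
  have hfu₀ : f (p + j₀) u₀ = b j₀ := by
    rw [hu₀def, hcombdef]
    simp only [LinearMap.coe_mk, AddHom.coe_mk]
    rw [map_sum, Finset.sum_eq_single j₀]
    · rw [map_smul, hbi (p + j₀) (p + j₀), if_pos rfl]; simp
    · intro j _ hj
      rw [map_smul, hbi (p + j₀) (p + j), if_neg (by
        intro hc
        exact hj (by
          have : (j₀ : ℕ) = (j : ℕ) := by omega
          exact (Fin.ext this.symm)))]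
      simp
    · intro h; exact absurd (Finset.mem_univ j₀) h
  have hu₀M : u₀ ∉ M := by
    intro hmem
    rw [hfM (p + j₀) u₀ hmem] at hfu₀
    exact hj₀ hfu₀.symm
  have hQu₀ : M.mkQ u₀ ≠ 0 := by
    rw [Submodule.mkQ_apply, ne_eq, Submodule.Quotient.mk_eq_zero]
    exact hu₀M
  have hc : (0:ℝ) < ‖M.mkQ u₀‖ := norm_pos_iff.2 hQu₀
  set c : ℝ := ‖M.mkQ u₀‖⁻¹ with hcdef
  have hc0 : c ≠ 0 := inv_ne_zero (ne_of_gt hc)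
  -- the coefficients
  set q := p + N' with hqdef
  set a : ℕ → ℝ := fun i =>
    if h : p ≤ i ∧ i < q then c * b ⟨i - p, by omega⟩ else 0 with hadef
  have ha_in : ∀ i, ∀ h : p ≤ i ∧ i < q, a i = c * b ⟨i - p, by omega⟩ := by
    intro i h
    simp only [hadef]
    rw [dif_pos h]
  have ha_out : ∀ i, ¬(p ≤ i ∧ i < q) → a i = 0 := by
    intro i h
    simp only [hadef]
    rw [dif_neg h]
  have hsupp : ∀ i, i ∉ Finset.Ico N q → a i = 0 := by
    intro i hi
    rw [Finset.mem_Ico] at hi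
    push_neg at hi
    refine ha_out i ?_
    rintro ⟨hp, hq⟩
    omega
  -- the sum over the inner block equals c • u₀
  have hsum2 : ∑ i ∈ Finset.Ico p q, a i • z i = c • u₀ := by
    rw [hu₀def, hcombdef]
    simp only [LinearMap.coe_mk, AddHom.coe_mk]
    rw [Finset.smul_sum]
    rw [Finset.sum_Ico_eq_sum_range]
    have hqp : q - p = N' := by omega
    rw [hqp]
    rw [← Fin.sum_univ_eq_sum_range (fun j => a (p + j) • z (p + j)) N']
    apply Finset.sum_congr rfl
    intro j _
    have hjlt : (j:ℕ) < N' := j.isLt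
    rw [ha_in (p + (j:ℕ)) ⟨by omega, by omega⟩]
    have hfin : (⟨p + (j:ℕ) - p, by omega⟩ : Fin N') = j := by
      apply Fin.ext
      simp
    rw [hfin, smul_smul]
  have hsplit : Finset.Ico N q = Finset.Ico N p ∪ Finset.Ico p q := by
    rw [Finset.Ico_union_Ico_eq_Ico hpN (by omega)]
  have hz : ∑ i ∈ Finset.Ico N p, a i • z i = 0 := by
    apply Finset.sum_eq_zero
    intro i hi
    rw [Finset.mem_Ico] at hi
    rw [ha_out i (by omega), zero_smul]
  have hsum : ∑ i ∈ Finset.Ico N q, a i • z i = c • u₀ := by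
    rw [hsplit, Finset.sum_union (Finset.Ico_disjoint_Ico_consecutive _ _ _), hz, zero_add, hsum2]
  -- norm of the quotient image
  have hnorm1 : ‖M.mkQ (∑ i ∈ Finset.Ico N q, a i • z i)‖ = 1 := by
    rw [hsum, map_smul, norm_smul, Real.norm_eq_abs, hcdef,
      abs_of_nonneg (inv_nonneg.2 hc.le), inv_mul_cancel₀ (ne_of_gt hc)]
  refine ⟨q, by omega, a, hsupp, ?_, hnorm1, ?_, ?_⟩
  · -- membership in the W i
    intro i hi
    rw [hsum]
    exact Submodule.smul_mem _ c (hWu₀ ⟨i, by omega⟩)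
  · -- T bound
    have hT := Tblock_bound T M z f hfM hbi hα h1 h2 p q a
    rw [hsum2] at hT
    have : ‖M.mkQ (c • u₀)‖ = 1 := by rw [← hsum]; exact hnorm1
    rw [this, mul_one] at hT
    rw [hsum]
    exact hT.trans hrp
  · -- Mazur property
    intro s hs t
    refine hΦ s hs _ ?_
    intro φ hφ
    have h0 := hφu₀ φ hφ
    rw [Submodule.mkQ_apply] at h0
    rw [hsum]
    simp [map_smul, h0]

end Aux

theorem stmt19 {E F : Type*} [NormedAddCommGroup E] [NormedSpace ℝ E] [CompleteSpace E]
    [NormedAddCommGroup F] [NormedSpace ℝ F] [CompleteSpace F]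
    (T : E →L[ℝ] F) (M : Submodule ℝ E) (hM : IsClosed (M : Set E))
    (z : ℕ → E) (f : ℕ → E →L[ℝ] ℝ)
    (hfM : ∀ n, ∀ x ∈ M, f n x = 0)
    (hbi : ∀ n m, f n (z m) = if n = m then 1 else 0)
    (α : ℝ) (hα : 1 < α)
    (h1 : ∀ n, ‖M.mkQ (z n)‖ ≤ α ^ n * ‖f n‖⁻¹)
    (h2 : ∀ n, ‖T (z n)‖ ≤ (α ^ (2 * n))⁻¹ * ‖M.mkQ (z n)‖)
    (ε : ℕ → ℝ) (hε : ∀ n, 0 < ε n)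
    (W : ℕ → Submodule ℝ E) (hWc : ∀ n, IsClosed ((W n : Set E)))
    (hWf : ∀ n, FiniteDimensional ℝ (E ⧸ W n)) :
    ∃ u : ℕ → E, IsBlockSeq z u ∧
      IsNormalizedBasicSeq (fun n => M.mkQ (u n)) ∧
      (∀ n, ∀ i ≤ n, u n ∈ W i) ∧
      (∀ n, ‖T (u n)‖ ≤ ε n) := by
  classical
  have hkey : ∀ (n N : ℕ) (S : Submodule ℝ (E ⧸ M)), FiniteDimensional ℝ S →
      ∃ q, N < q ∧ ∃ a : ℕ → ℝ,
        (∀ i, i ∉ Finset.Ico N q → a i = 0) ∧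
        (∀ i ≤ n, (∑ i ∈ Finset.Ico N q, a i • z i) ∈ W i) ∧
        ‖M.mkQ (∑ i ∈ Finset.Ico N q, a i • z i)‖ = 1 ∧
        ‖T (∑ i ∈ Finset.Ico N q, a i • z i)‖ ≤ ε n ∧
        (∀ s ∈ S, ∀ t : ℝ, ‖s‖ ≤ (1 + (2:ℝ)⁻¹ ^ (n+1)) *
          ‖s + t • M.mkQ (∑ i ∈ Finset.Ico N q, a i • z i)‖) :=
    fun n N S hS => key T M hM z f hfM hbi hα h1 h2 W hWf n N S hS
      (by positivity) (hε n)
  choose q' hlt a' hsupp' hW' hnorm' hT' hmaz' using hkey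
  -- recursive construction
  let St := (ℕ → ℕ) × (ℕ → ℕ → ℝ)
  let bstart : St → ℕ → ℕ := fun st k => if k = 0 then 0 else st.1 (k-1)
  let ublock : St → ℕ → E := fun st k =>
    ∑ i ∈ Finset.Ico (bstart st k) (st.1 k), st.2 k i • z i
  let SS : St → ℕ → Submodule ℝ (E ⧸ M) := fun st n =>
    Submodule.span ℝ (((Finset.range n).image (fun k => M.mkQ (ublock st k))
      : Finset (E ⧸ M)) : Set (E ⧸ M))
  have hSSfin : ∀ st n, FiniteDimensional ℝ (SS st n) := fun st n =>
    FiniteDimensional.span_finset ℝ _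
  let st₀ : St := ((fun _ => 0), (fun _ _ => 0))
  let succf : ℕ → St → St := fun n st =>
    (Function.update st.1 (n+1) (q' (n+1) (st.1 n) (SS st (n+1)) (hSSfin st (n+1))),
     Function.update st.2 (n+1) (a' (n+1) (st.1 n) (SS st (n+1)) (hSSfin st (n+1))))
  let base : St :=
    (Function.update st₀.1 0 (q' 0 0 (SS st₀ 0) (hSSfin st₀ 0)),
     Function.update st₀.2 0 (a' 0 0 (SS st₀ 0) (hSSfin st₀ 0)))
  let F : ℕ → St := fun n => Nat.rec (motive := fun _ => St) base succf n
  have hFs : ∀ n, F (n+1) = succf n (F n) := fun _ => rfl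
  let qe : ℕ → ℕ := fun k => (F k).1 k
  let A : ℕ → ℕ → ℝ := fun k => (F k).2 k
  let P : ℕ → ℕ := fun k => if k = 0 then 0 else qe (k-1)
  let u : ℕ → E := fun k => ∑ i ∈ Finset.Ico (P k) (qe k), A k i • z i
  let spanIm : ℕ → Submodule ℝ (E ⧸ M) := fun k =>
    Submodule.span ℝ (((Finset.range k).image (fun j => M.mkQ (u j))
      : Finset (E ⧸ M)) : Set (E ⧸ M))
  -- stability of the recursion
  have hstab : ∀ n k, k ≤ n → (F n).1 k = qe k ∧ (F n).2 k = A k := by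
    intro n
    induction n with
    | zero =>
      intro k hk
      have : k = 0 := by omega
      subst this
      exact ⟨rfl, rfl⟩
    | succ n ih =>
      intro k hk
      rcases Nat.eq_or_lt_of_le hk with hk1 | hk2
      · subst hk1
        exact ⟨rfl, rfl⟩
      · have hk' : k ≤ n := by omega
        have hne : k ≠ n + 1 := by omega
        constructor
        · exact (Function.update_of_ne hne _ (F n).1).trans (ih k hk').1
        · exact (Function.update_of_ne hne _ (F n).2).trans (ih k hk').2
  have hublock : ∀ n k, k ≤ n → ublock (F n) k = u k := by
    intro n k hk
    show (∑ i ∈ Finset.Ico (bstart (F n) k) ((F n).1 k), (F n).2 k i • z i) = u k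
    rw [(hstab n k hk).1, (hstab n k hk).2]
    have hb : bstart (F n) k = P k := by
      show (if k = 0 then 0 else (F n).1 (k-1)) = (if k = 0 then 0 else qe (k-1))
      rcases Nat.eq_zero_or_pos k with h0 | h0
      · simp [h0]
      · rw [if_neg (by omega), if_neg (by omega), (hstab n (k-1) (by omega)).1]
    rw [hb]
  have hSSeq : ∀ n k, k ≤ n + 1 → SS (F n) k = spanIm k := by
    intro n k hk
    show Submodule.span ℝ _ = Submodule.span ℝ _
    congr 1
    norm_cast
    apply Finset.image_congr
    intro x hx
    rw [Finset.mem_coe, Finset.mem_range] at hx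
    show M.mkQ (ublock (F n) x) = M.mkQ (u x)
    rw [hublock n x (by omega)]
  -- characterization of each step
  have hchar : ∀ n, ∃ (Nn : ℕ) (Sn : Submodule ℝ (E ⧸ M)) (pf : FiniteDimensional ℝ Sn),
      P n = Nn ∧ Sn = spanIm n ∧ qe n = q' n Nn Sn pf ∧ A n = a' n Nn Sn pf := by
    intro n
    cases n with
    | zero =>
      refine ⟨0, SS st₀ 0, hSSfin st₀ 0, rfl, ?_, ?_, ?_⟩
      · show Submodule.span ℝ _ = Submodule.span ℝ _
        rw [Finset.range_zero, Finset.image_empty, Finset.image_empty]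
      · exact Function.update_self 0 _ st₀.1
      · exact Function.update_self 0 _ st₀.2
    | succ n =>
      refine ⟨(F n).1 n, SS (F n) (n+1), hSSfin (F n) (n+1), ?_, ?_, ?_, ?_⟩
      · show (if n + 1 = 0 then 0 else qe n) = (F n).1 n
        rw [if_neg (Nat.succ_ne_zero n)]
      · exact hSSeq n (n+1) le_rfl
      · exact Function.update_self (n+1) _ (F n).1
      · exact Function.update_self (n+1) _ (F n).2
  -- the uniform facts
  have hufacts : ∀ n, P n < qe n ∧ (∀ i, i ∉ Finset.Ico (P n) (qe n) → A n i = 0) ∧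
      (∀ i ≤ n, u n ∈ W i) ∧ ‖M.mkQ (u n)‖ = 1 ∧ ‖T (u n)‖ ≤ ε n ∧
      (∀ s ∈ spanIm n, ∀ t : ℝ, ‖s‖ ≤ (1 + (2:ℝ)⁻¹ ^ (n+1)) * ‖s + t • M.mkQ (u n)‖) := by
    intro n
    obtain ⟨Nn, Sn, pf, hPn, hSn, hqn, han⟩ := hchar n
    have huu : u n = ∑ i ∈ Finset.Ico Nn (q' n Nn Sn pf), a' n Nn Sn pf i • z i := by
      show (∑ i ∈ Finset.Ico (P n) (qe n), A n i • z i) = _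
      rw [hPn, hqn, han]
    refine ⟨?_, ?_, ?_, ?_, ?_, ?_⟩
    · rw [hPn, hqn]; exact hlt n Nn Sn pf
    · intro i hi
      rw [han]
      apply hsupp' n Nn Sn pf
      have hIeq : Finset.Ico Nn (q' n Nn Sn pf) = Finset.Ico (P n) (qe n) := by
        rw [hPn, hqn]
      rw [hIeq]
      exact hi
    · intro i hi
      rw [huu]
      exact hW' n Nn Sn pf i hi
    · rw [huu]
      exact hnorm' n Nn Sn pf
    · rw [huu]
      exact hT' n Nn Sn pf
    · intro s hs t
      rw [huu]
      exact hmaz' n Nn Sn pf s (by rw [hSn]; exact hs) t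
  -- block structure
  have hP1 : ∀ n, P (n+1) = qe n := fun n => if_neg (Nat.succ_ne_zero n)
  have hPmono : StrictMono P := by
    apply strictMono_nat_of_lt_succ
    intro n
    rw [hP1 n]
    rcases Nat.eq_zero_or_pos n with h0 | h0
    · subst h0
      show P 0 < qe 0
      exact (hufacts 0).1
    · calc P n < qe n := (hufacts n).1
        _ = qe n := rfl
  have hPle : ∀ n, n ≤ P n := fun n => hPmono.le_apply
  let Aglob : ℕ → ℝ := fun i => ∑ k ∈ Finset.range (i+1), A k i
  have hAglob : ∀ n i, P n ≤ i → i < P (n+1) → Aglob i = A n i := by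
    intro n i hi1 hi2
    show (∑ k ∈ Finset.range (i+1), A k i) = A n i
    rw [Finset.sum_eq_single n]
    · intro k hk hkn
      apply (hufacts k).2.1
      rw [Finset.mem_Ico]
      rintro ⟨hki1, hki2⟩
      rcases lt_or_gt_of_ne hkn with h | h
      · have h5 : qe k ≤ P n := by
          rw [← hP1 k]
          exact hPmono.monotone h
        omega
      · have h5 : P (n+1) ≤ P k := hPmono.monotone h
        omega
    · intro hn
      exfalso
      apply hn
      rw [Finset.mem_range]
      have := hPle n
      omega
  have hublockglob : ∀ n, u n = ∑ i ∈ Finset.Ico (P n) (P (n+1)), Aglob i • z i := by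
    intro n
    show (∑ i ∈ Finset.Ico (P n) (qe n), A n i • z i) = _
    rw [hP1 n]
    apply Finset.sum_congr rfl
    intro i hi
    rw [Finset.mem_Ico] at hi
    rw [hAglob n i hi.1 (by rw [hP1]; exact hi.2)]
  -- basic sequence estimates
  have hstep1 : ∀ (b : ℕ → ℝ) (k : ℕ),
      ‖∑ i ∈ Finset.range k, b i • M.mkQ (u i)‖
        ≤ (1 + (2:ℝ)⁻¹ ^ (k+1)) * ‖∑ i ∈ Finset.range (k+1), b i • M.mkQ (u i)‖ := by
    intro b k
    have hmem : (∑ i ∈ Finset.range k, b i • M.mkQ (u i)) ∈ spanIm k := by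
      apply Submodule.sum_mem
      intro i hi
      apply Submodule.smul_mem
      apply Submodule.subset_span
      exact Finset.mem_coe.2 (Finset.mem_image_of_mem _ hi)
    have h := (hufacts k).2.2.2.2.2 _ hmem (b k)
    rw [Finset.sum_range_succ]
    exact h
  have hprodle : ∀ m n : ℕ, (∏ k ∈ Finset.Ico m n, (1 + (2:ℝ)⁻¹ ^ (k+1))) ≤ 3 := by
    intro m n
    have h2 : (∏ k ∈ Finset.Ico m n, (1 + (2:ℝ)⁻¹ ^ (k+1)))
        ≤ ∏ k ∈ Finset.Ico m n, Real.exp ((2:ℝ)⁻¹ ^ (k+1)) := by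
      apply Finset.prod_le_prod
      · intro k _; positivity
      · intro k _
        have := Real.add_one_le_exp ((2:ℝ)⁻¹ ^ (k+1))
        linarith
    rw [← Real.exp_sum] at h2
    have h3 : (∑ k ∈ Finset.Ico m n, (2:ℝ)⁻¹ ^ (k+1)) ≤ 1 := by
      have h4 : (∑ k ∈ Finset.Ico m n, (2:ℝ)⁻¹ ^ (k+1))
          = (∑ k ∈ Finset.Ico m n, (2:ℝ)⁻¹ ^ k) * 2⁻¹ := by
        rw [Finset.sum_mul]
        apply Finset.sum_congr rfl
        intros; rw [pow_succ]
      rw [h4]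
      have h5 : (∑ k ∈ Finset.Ico m n, (2:ℝ)⁻¹ ^ k) ≤ (2:ℝ)⁻¹ ^ m * (1 - 2⁻¹)⁻¹ :=
        geom_Ico_le (by norm_num) (by norm_num) m n
      have h6 : ((2:ℝ)⁻¹) ^ m ≤ 1 := pow_le_one₀ (by norm_num) (by norm_num)
      have h7 : ((2:ℝ)⁻¹) ^ m * (1 - 2⁻¹)⁻¹ ≤ 2 := by
        rw [show ((1:ℝ) - 2⁻¹)⁻¹ = 2 by norm_num]
        linarith
      nlinarith [h5, h7]
    have h5 : Real.exp (∑ k ∈ Finset.Ico m n, (2:ℝ)⁻¹ ^ (k+1)) ≤ Real.exp 1 :=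
      Real.exp_le_exp.2 h3
    have h6 : Real.exp 1 < 3 := lt_trans Real.exp_one_lt_d9 (by norm_num)
    linarith
  have hbasic : ∀ (b : ℕ → ℝ) (m n : ℕ), m ≤ n →
      ‖∑ i ∈ Finset.range m, b i • M.mkQ (u i)‖
        ≤ (∏ k ∈ Finset.Ico m n, (1 + (2:ℝ)⁻¹ ^ (k+1)))
          * ‖∑ i ∈ Finset.range n, b i • M.mkQ (u i)‖ := by
    intro b m n hmn
    induction n with
    | zero =>
      have : m = 0 := by omega
      subst this
      simp
    | succ n ih =>
      rcases Nat.eq_or_lt_of_le hmn with hc | hc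
      · rw [hc, Finset.Ico_self, Finset.prod_empty, one_mul]
      · have hmn' : m ≤ n := by omega
        have hprodnn : (0:ℝ) ≤ ∏ k ∈ Finset.Ico m n, (1 + (2:ℝ)⁻¹ ^ (k+1)) := by
          apply Finset.prod_nonneg
          intro k _; positivity
        calc ‖∑ i ∈ Finset.range m, b i • M.mkQ (u i)‖
            ≤ (∏ k ∈ Finset.Ico m n, (1 + (2:ℝ)⁻¹ ^ (k+1)))
              * ‖∑ i ∈ Finset.range n, b i • M.mkQ (u i)‖ := ih hmn'
          _ ≤ (∏ k ∈ Finset.Ico m n, (1 + (2:ℝ)⁻¹ ^ (k+1)))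
              * ((1 + (2:ℝ)⁻¹ ^ (n+1)) * ‖∑ i ∈ Finset.range (n+1), b i • M.mkQ (u i)‖) :=
            mul_le_mul_of_nonneg_left (hstep1 b n) hprodnn
          _ = (∏ k ∈ Finset.Ico m (n+1), (1 + (2:ℝ)⁻¹ ^ (k+1)))
              * ‖∑ i ∈ Finset.range (n+1), b i • M.mkQ (u i)‖ := by
            rw [Finset.prod_Ico_succ_top hmn']
            ring
  -- conclusion
  refine ⟨u, ⟨P, Aglob, hPmono, fun n => hublockglob n⟩,
    ⟨fun n => (hufacts n).2.2.2.1, 3, by norm_num, ?_⟩,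
    fun n i hi => (hufacts n).2.2.1 i hi,
    fun n => (hufacts n).2.2.2.2.1⟩
  intro b m n hmn
  calc ‖∑ i ∈ Finset.range m, b i • M.mkQ (u i)‖
      ≤ (∏ k ∈ Finset.Ico m n, (1 + (2:ℝ)⁻¹ ^ (k+1)))
        * ‖∑ i ∈ Finset.range n, b i • M.mkQ (u i)‖ := hbasic b m n hmn
    _ ≤ 3 * ‖∑ i ∈ Finset.range n, b i • M.mkQ (u i)‖ :=
        mul_le_mul_of_nonneg_right (hprodle m n) (norm_nonneg _)
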